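/- Let W be strictly increasing, right-continuous on [0,1] with W(0)=0, and let c ≥ W(x) for some fixed x ∈ [0,1]. Then for all s ∈ [0,x) and all n ≥ 0, ∫_{[s,x)} (c − W(ξ⁺))ⁿ dW_*(ξ) ≤ (c − W(s))^{n+1}/(n+1), where W(ξ⁺) denotes the right limit and dW_* is the measure induced by the increasing function W. (Stated for the measure with half-open intervals [a,b).) -/

import Mathlib

open MeasureTheory Set


lemma aux_meas {W : ℝ → ℝ} {μ : Measure ℝ}
    (hWmono : MonotoneOn W (Set.Icc 0 1))
    (hWright : ∀ y ∈ Set.Ico (0:ℝ) 1, ContinuousWithinAt W (Set.Ici y) y)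
    (hμ : ∀ a b : ℝ, 0 ≤ a → a ≤ b → b ≤ 1 →
      μ (Set.Ico a b) = ENNReal.ofReal (W b - W a))
    {s x : ℝ} (hs0 : 0 ≤ s) (hx1 : x ≤ 1) (u : ℝ) :
    μ {ξ | ξ ∈ Set.Ico s x ∧ W ξ < u} ≤ ENNReal.ofReal (u - W s) := by
  set A := {ξ | ξ ∈ Set.Ico s x ∧ W ξ < u} with hA
  rcases A.eq_empty_or_nonempty with hAe | hAne
  · simp [hAe]
  have hbdd : BddAbove A := ⟨x, fun ξ hξ => hξ.1.2.le⟩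
  set b := sSup A with hb
  have hEx := hAne
  obtain ⟨ξ₀, hξ₀⟩ := hEx
  have hsb : s ≤ b := hξ₀.1.1.trans (le_csSup hbdd hξ₀)
  have hbx : b ≤ x := csSup_le hAne fun ξ hξ => hξ.1.2.le
  by_cases hbA : b ∈ A
  · -- b ∈ A : use right-continuity at b
    have hbx' : b < x := hbA.1.2
    have hb01 : b ∈ Set.Ico (0:ℝ) 1 := ⟨hs0.trans hsb, lt_of_lt_of_le hbx' hx1⟩
    have hT : Filter.Tendsto W (nhdsWithin b (Set.Ioi b)) (nhds (W b)) :=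
      (hWright b hb01).mono_left (nhdsWithin_mono _ Set.Ioi_subset_Ici_self)
    have hev1 : ∀ᶠ ξ in nhdsWithin b (Set.Ioi b), W ξ < u := hT (Iio_mem_nhds hbA.2)
    have hev2 : ∀ᶠ ξ in nhdsWithin b (Set.Ioi b), ξ < x :=
      mem_nhdsWithin_of_mem_nhds (Iio_mem_nhds hbx')
    have hev3 : ∀ᶠ ξ in nhdsWithin b (Set.Ioi b), ξ ∈ Set.Ioi b := self_mem_nhdsWithin
    obtain ⟨b', hWb', hb'x, hbb'⟩ := (hev1.and (hev2.and hev3)).exists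
    have hsub : A ⊆ Set.Ico s b' := fun ξ hξ =>
      ⟨hξ.1.1, lt_of_le_of_lt (le_csSup hbdd hξ) hbb'⟩
    calc μ A ≤ μ (Set.Ico s b') := measure_mono hsub
      _ = ENNReal.ofReal (W b' - W s) :=
          hμ s b' hs0 (hsb.trans hbb'.le) (hb'x.le.trans hx1)
      _ ≤ ENNReal.ofReal (u - W s) := by
          apply ENNReal.ofReal_le_ofReal; linarith
  · -- b ∉ A
    have hsblt : s < b := by
      rcases lt_or_eq_of_le hsb with h | h
      · exact h
      · exfalso
        have : ξ₀ = b := le_antisymm (le_csSup hbdd hξ₀) (h ▸ hξ₀.1.1)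
        exact hbA (this ▸ hξ₀)
    have hsub : A ⊆ Set.Ico s b := by
      intro ξ hξ
      rcases lt_or_eq_of_le (le_csSup hbdd hξ) with h | h
      · exact ⟨hξ.1.1, h⟩
      · exact absurd (show b ∈ A by rw [hb, ← h]; exact hξ) hbA
    set r : ℕ → ℝ := fun k => b - (b - s) / (k + 1) with hr
    have hrmono : Monotone r := by
      intro k m hkm
      have h2 : (k:ℝ) + 1 ≤ (m:ℝ) + 1 := by exact_mod_cast by omega
      have hdiv : (b - s) / ((m:ℝ) + 1) ≤ (b - s) / ((k:ℝ) + 1) := by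
        gcongr <;> first | positivity | linarith
      simp only [hr]; push_cast; linarith
    have hrub : ∀ k, s ≤ r k ∧ r k < b := by
      intro k
      have h1 : (0:ℝ) < (k:ℝ) + 1 := by positivity
      constructor
      · have : (b - s) / ((k:ℝ) + 1) ≤ b - s := by
          apply div_le_self (by linarith) (by linarith)
        simp only [hr]; linarith
      · have : 0 < (b - s) / ((k:ℝ) + 1) := div_pos (by linarith) (by positivity)
        simp only [hr]; linarith
    have hU : (⋃ k : ℕ, Set.Ico s (r k)) = Set.Ico s b := by
      apply Set.Subset.antisymm
      · exact Set.iUnion_subset fun k => Set.Ico_subset_Ico_right (hrub k).2.le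
      · intro ξ hξ
        obtain ⟨k, hk⟩ := exists_nat_gt ((b - s) / (b - ξ))
        refine Set.mem_iUnion.2 ⟨k, hξ.1, ?_⟩
        have hbξ : 0 < b - ξ := by linarith [hξ.2]
        have : (b - s) < (b - ξ) * ((k:ℝ) + 1) := by
          rw [div_lt_iff₀ hbξ] at hk; nlinarith
        have h1 : (0:ℝ) < (k:ℝ) + 1 := by positivity
        have : (b - s) / ((k:ℝ) + 1) < b - ξ := by
          rw [div_lt_iff₀ h1]; nlinarith
        simp only [hr]; linarith
    have hmeas : μ (Set.Ico s b) = ⨆ k, μ (Set.Ico s (r k)) := by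
      rw [← hU]
      exact (hrmono.directed_le.mono_comp _ fun _ _ h => Set.Ico_subset_Ico_right h).measure_iUnion
    have hbound : ∀ k, μ (Set.Ico s (r k)) ≤ ENNReal.ofReal (u - W s) := by
      intro k
      obtain ⟨hsk, hkb⟩ := hrub k
      rw [hμ s (r k) hs0 hsk (hkb.le.trans (hbx.trans hx1))]
      apply ENNReal.ofReal_le_ofReal
      obtain ⟨ξ', hξ'A, hξ'gt⟩ := exists_lt_of_lt_csSup hAne hkb
      have hWrk : W (r k) ≤ W ξ' := by
        apply hWmono ⟨hs0.trans hsk, hkb.le.trans (hbx.trans hx1)⟩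
          ⟨hs0.trans hξ'A.1.1, hξ'A.1.2.le.trans hx1⟩ hξ'gt.le
      linarith [hξ'A.2]
    calc μ A ≤ μ (Set.Ico s b) := measure_mono hsub
      _ = ⨆ k, μ (Set.Ico s (r k)) := hmeas
      _ ≤ ENNReal.ofReal (u - W s) := iSup_le hbound


/-- For `W` strictly increasing on `[0,1]` with `W 0 = 0`, `μ` the induced measure on
half-open intervals (`μ([a,b)) = W(b) − W(a)`), and a constant `c ≥ W(x)`, for all
`s ∈ [0,x)` and `n ≥ 0`:
`∫_{[s,x)} (c − W(ξ⁺))ⁿ dμ(ξ) ≤ (c − W(s))^{n+1}/(n+1)`. -/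
theorem stmt5 (W : ℝ → ℝ) (μ : Measure ℝ) [IsFiniteMeasure μ]
    (hW : StrictMonoOn W (Set.Icc 0 1)) (hW0 : W 0 = 0)
    (hWright : ∀ y ∈ Set.Ico (0:ℝ) 1, ContinuousWithinAt W (Set.Ici y) y)
    (hμ : ∀ a b : ℝ, 0 ≤ a → a ≤ b → b ≤ 1 →
      μ (Set.Ico a b) = ENNReal.ofReal (W b - W a))
    (x c : ℝ) (hx : x ∈ Set.Icc (0:ℝ) 1) (hc : W x ≤ c) :
    ∀ s ∈ Set.Ico (0:ℝ) x, ∀ n : ℕ,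
      ∫ ξ in Set.Ico s x, (c - Function.rightLim W ξ) ^ n ∂μ
        ≤ (c - W s) ^ (n + 1) / (n + 1 : ℝ) := by
  intro s hs n
  obtain ⟨hs0, hsx⟩ := hs
  have hx1 := hx.2
  have hmono := hW.monotoneOn
  have hIcosub : Set.Ico s x ⊆ Set.Icc (0:ℝ) 1 := fun ξ hξ =>
    ⟨hs0.trans hξ.1, hξ.2.le.trans hx1⟩
  have hWs_le : W s ≤ W x := hmono ⟨hs0, hsx.le.trans hx1⟩ hx hsx.le
  have hC0 : 0 ≤ c - W s := by linarith
  -- the clamped monotone version of W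
  set W' : ℝ → ℝ := fun ξ => W (min 1 (max 0 ξ)) with hW'def
  have hclampmem : ∀ ξ : ℝ, min 1 (max 0 ξ) ∈ Set.Icc (0:ℝ) 1 := fun ξ =>
    ⟨le_min zero_le_one (le_max_left 0 ξ), min_le_left _ _⟩
  have hW'm : Monotone W' := by
    intro a b hab
    exact hmono (hclampmem a) (hclampmem b)
      (min_le_min le_rfl (max_le_max le_rfl hab))
  have hW'eq : ∀ ξ ∈ Set.Icc (0:ℝ) 1, W' ξ = W ξ := by
    intro ξ hξ
    simp only [hW'def]
    rw [max_eq_right hξ.1, min_eq_right hξ.2]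
  -- replace rightLim by W'
  have hrl : Set.EqOn (fun ξ => (c - Function.rightLim W ξ) ^ n)
      (fun ξ => (c - W' ξ) ^ n) (Set.Ico s x) := by
    intro ξ hξ
    have hξ01 : ξ ∈ Set.Ico (0:ℝ) 1 := ⟨hs0.trans hξ.1, lt_of_lt_of_le hξ.2 hx1⟩
    have hT : Filter.Tendsto W (nhdsWithin ξ (Set.Ioi ξ)) (nhds (W ξ)) :=
      (hWright ξ hξ01).mono_left (nhdsWithin_mono _ Set.Ioi_subset_Ici_self)
    have : Function.rightLim W ξ = W ξ :=
      rightLim_eq_of_tendsto hT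
    simp only [this, hW'eq ξ (hIcosub hξ)]
  rw [setIntegral_congr_fun measurableSet_Ico hrl]
  set f : ℝ → ℝ := fun ξ => c - W' ξ with hfdef
  have hfm : Measurable f := measurable_const.sub hW'm.measurable
  set ν : Measure ℝ := μ.restrict (Set.Ico s x) with hν
  have hfnn : ∀ ξ ∈ Set.Ico s x, 0 ≤ f ξ := by
    intro ξ hξ
    have h1 : W' ξ = W ξ := hW'eq ξ (hIcosub hξ)
    have h2 : W ξ ≤ W x := hmono (hIcosub hξ) hx hξ.2.le
    simp only [hfdef, h1]; linarith
  -- key measure bound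
  have hkey : ∀ t : ℝ, ν {a | t < f a} ≤ ENNReal.ofReal (c - W s - t) := by
    intro t
    rw [hν, Measure.restrict_apply (measurableSet_lt measurable_const hfm)]
    refine le_trans (measure_mono ?_)
      (le_of_eq_of_le (by rfl)
        (le_trans (aux_meas hmono hWright hμ hs0 hx1 (c - t)) ?_))
    · intro ξ hξ
      obtain ⟨ht, hmem⟩ := hξ
      have heq : W' ξ = W ξ := hW'eq ξ (hIcosub hmem)
      refine ⟨hmem, ?_⟩
      have ht' : t < c - W' ξ := ht
      rw [heq] at ht'
      linarith
    · apply ENNReal.ofReal_le_ofReal; ring_nf; rfl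
  rcases Nat.eq_zero_or_pos n with hn | hn
  · -- n = 0
    subst hn
    simp only [pow_zero, zero_add, pow_one]
    rw [setIntegral_const]
    rw [measureReal_def, hμ s x hs0 hsx.le hx1]
    have : (ENNReal.ofReal (W x - W s)).toReal = W x - W s :=
      ENNReal.toReal_ofReal (by linarith)
    rw [this]
    simp only [smul_eq_mul, mul_one]
    norm_num
    linarith
  · -- n ≥ 1
    set C := c - W s with hCdef
    set g : ℝ → ℝ := fun t => (n : ℝ) * t ^ (n - 1) with hgdef
    have hgc : Continuous g := continuous_const.mul (continuous_pow _)
    have hprim : ∀ y : ℝ, (∫ t in (0:ℝ)..y, g t) = y ^ n := by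
      intro y
      simp only [hgdef]
      rw [intervalIntegral.integral_const_mul, integral_pow]
      rw [Nat.sub_add_cancel hn]
      rw [zero_pow (by omega : n ≠ 0)]
      field_simp
      rw [Nat.cast_sub hn]; push_cast; ring
    have hfnn' : 0 ≤ᵐ[ν] f :=
      (ae_restrict_iff' measurableSet_Ico).2 (Filter.Eventually.of_forall hfnn)
    have hlayer := lintegral_comp_eq_lintegral_meas_lt_mul ν hfnn' hfm.aemeasurable
      (fun t _ => hgc.intervalIntegrable 0 t)
      ((ae_restrict_iff' measurableSet_Ioi).2 (Filter.Eventually.of_forall (fun t ht => by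
        have h0 : (0:ℝ) < t := ht
        simp only [hgdef]
        positivity)))
    simp only [hprim] at hlayer
    -- bound the RHS of hlayer
    have hb1 : (∫⁻ t in Set.Ioi (0:ℝ), ν {a | t < f a} * ENNReal.ofReal (g t))
        ≤ ∫⁻ t in Set.Ioi (0:ℝ), ENNReal.ofReal (C - t) * ENNReal.ofReal (g t) :=
      lintegral_mono fun t => mul_le_mul_left (hkey t) _
    have hsplit : Set.Ioi (0:ℝ) = Set.Ioc 0 C ∪ Set.Ioi C := (Set.Ioc_union_Ioi_eq_Ioi hC0).symm
    have hz : (∫⁻ t in Set.Ioi C, ENNReal.ofReal (C - t) * ENNReal.ofReal (g t)) = 0 := by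
      rw [setLIntegral_congr_fun measurableSet_Ioi
        (fun t (ht : t ∈ Set.Ioi C) => by
          rw [ENNReal.ofReal_eq_zero.2 (by simp at ht; linarith), zero_mul])]
      exact lintegral_zero
    have hIoc : (∫⁻ t in Set.Ioc (0:ℝ) C, ENNReal.ofReal (C - t) * ENNReal.ofReal (g t))
        = ENNReal.ofReal (∫ t in Set.Ioc (0:ℝ) C, (C - t) * g t) := by
      have step1 : (∫⁻ t in Set.Ioc (0:ℝ) C, ENNReal.ofReal (C - t) * ENNReal.ofReal (g t))
          = ∫⁻ t in Set.Ioc (0:ℝ) C, ENNReal.ofReal ((C - t) * g t) := by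
        apply lintegral_congr_ae
        filter_upwards [ae_restrict_mem measurableSet_Ioc] with t ht
        rw [ENNReal.ofReal_mul (by linarith [ht.2] : (0:ℝ) ≤ C - t)]
      rw [step1, ← ofReal_integral_eq_lintegral_ofReal]
      · exact (((continuous_const.sub continuous_id).mul hgc).integrableOn_Ioc)
      · refine (ae_restrict_iff' measurableSet_Ioc).2 (Filter.Eventually.of_forall
          (fun t ht => mul_nonneg (by linarith [ht.2]) ?_))
        have h0 : (0:ℝ) < t := ht.1
        simp only [hgdef]
        positivity
    have hval : (∫ t in Set.Ioc (0:ℝ) C, (C - t) * g t) = C ^ (n + 1) / (n + 1) := by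
      rw [← intervalIntegral.integral_of_le hC0]
      have hexp : ∀ t : ℝ, (C - t) * g t = (n : ℝ) * C * t ^ (n - 1) - (n : ℝ) * t ^ n := by
        intro t
        have ht : t ^ (n - 1) * t = t ^ n := by
          rw [← pow_succ, Nat.sub_add_cancel hn]
        simp only [hgdef]; nlinarith [ht]
      simp only [hexp]
      rw [intervalIntegral.integral_sub (f := fun t => (n : ℝ) * C * t ^ (n - 1))
        (g := fun t => (n : ℝ) * t ^ n)
        (((continuous_const.mul (continuous_pow _))).intervalIntegrable 0 C)
        ((continuous_const.mul (continuous_pow _)).intervalIntegrable 0 C)]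
      rw [intervalIntegral.integral_const_mul, intervalIntegral.integral_const_mul,
        integral_pow, integral_pow]
      rw [Nat.sub_add_cancel hn]
      rw [zero_pow (by omega : n ≠ 0), zero_pow (by omega : n + 1 ≠ 0)]
      have hn0 : (n:ℝ) ≠ 0 := Nat.cast_ne_zero.2 (by omega)
      have hn1 : (n:ℝ) + 1 ≠ 0 := by positivity
      field_simp
      rw [Nat.cast_sub hn]; push_cast
      ring
    -- assemble
    have hfin : (∫⁻ ξ, ENNReal.ofReal (f ξ ^ n) ∂ν) ≤ ENNReal.ofReal (C ^ (n + 1) / (n + 1)) := by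
      rw [hlayer]
      refine le_trans hb1 ?_
      rw [hsplit, lintegral_union measurableSet_Ioi (Set.Ioc_disjoint_Ioi le_rfl), hz, add_zero,
        hIoc, hval]
    have hnn2 : 0 ≤ᵐ[ν] fun ξ => f ξ ^ n :=
      (ae_restrict_iff' measurableSet_Ico).2 (Filter.Eventually.of_forall
        (fun ξ hξ => pow_nonneg (hfnn ξ hξ) n))
    have hieq : (∫ ξ in Set.Ico s x, (c - W' ξ) ^ n ∂μ)
        = (∫⁻ ξ, ENNReal.ofReal (f ξ ^ n) ∂ν).toReal := by
      rw [← hν]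
      exact integral_eq_lintegral_of_nonneg_ae hnn2 ((hfm.pow_const n).aestronglyMeasurable)
    rw [hieq]
    refine le_trans (ENNReal.toReal_le_of_le_ofReal
      (div_nonneg (pow_nonneg hC0 _) (by positivity)) hfin) ?_
    rw [hCdef]
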